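/- Let $\mathbf{H} \in \mathbb{R}^{n\times n}$ be symmetric positive definite with eigenvalues $\mu_1, \dots, \mu_n$ (listed with multiplicity), $\mathbf{b} \in \mathbb{R}^n$, and $f(\mathbf{x}) = \frac{1}{2}\mathbf{x}^T\mathbf{H}\mathbf{x} + \mathbf{b}^T\mathbf{x}$. Let $\sigma$ be any permutation of $\{1, \dots, n\}$ and generate the gradient iteration $\mathbf{x}_{k+1} = \mathbf{x}_k - \mu_{\sigma(k+1)}^{-1}\,\mathbf{g}_k$ for $k = 0, \dots, n-1$, where $\mathbf{g}_k = \mathbf{H}\mathbf{x}_k + \mathbf{b}$. Then $\mathbf{g}_n = \mathbf{0}$, i.e., $\mathbf{x}_n$ is the unique minimizer of $f$. -/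

import Mathlib

open Matrix Polynomial

/-- Finite-termination principle (Section 2 of the paper): if the gradient
method's stepsizes run through the reciprocals of all eigenvalues of the
symmetric positive definite Hessian `H` (in any order given by a permutation
`σ`), then after `n` steps the gradient vanishes, i.e. `xₙ` is the unique
minimizer of `f(x) = ½xᵀHx + bᵀx`. -/
theorem stmt_5 (n : ℕ) (H : Matrix (Fin n) (Fin n) ℝ) (hH : H.PosDef)
    (μ : Fin n → ℝ)
    (hchar : H.charpoly = ∏ i : Fin n, (X - C (μ i)))
    (b : Fin n → ℝ) (σ : Equiv.Perm (Fin n))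
    (x : ℕ → Fin n → ℝ)
    (hiter : ∀ k : Fin n, x ((k : ℕ) + 1) = x (k : ℕ) - (μ (σ k))⁻¹ • (H *ᵥ x (k : ℕ) + b)) :
    H *ᵥ x n + b = 0 ∧
    ∀ y : Fin n → ℝ, y ≠ x n →
      (1 / 2) * (x n ⬝ᵥ (H *ᵥ x n)) + b ⬝ᵥ x n <
        (1 / 2) * (y ⬝ᵥ (H *ᵥ y)) + b ⬝ᵥ y := by
  classical
  -- determinant equals the product of the μ i
  have hdet : H.det = ∏ i : Fin n, μ i := by
    have h0 := Matrix.det_eq_sign_charpoly_coeff H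
    have h1 : H.charpoly.coeff 0 = ∏ i : Fin n, (-μ i) := by
      rw [hchar, Polynomial.coeff_zero_eq_eval_zero]
      simp [Polynomial.eval_prod]
    rw [h0, h1]
    have : ∏ i : Fin n, (-μ i) = (-1 : ℝ) ^ n * ∏ i : Fin n, μ i := by
      rw [show ((-1 : ℝ)) ^ n = ∏ _i : Fin n, (-1 : ℝ) by simp,
        ← Finset.prod_mul_distrib]
      simp
    rw [this, ← mul_assoc, Fintype.card_fin, ← mul_pow]
    norm_num
  have hμ : ∀ i, μ i ≠ 0 := by
    intro i hi
    have hpos := hH.det_pos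
    rw [hdet] at hpos
    have : ∏ i : Fin n, μ i = 0 := Finset.prod_eq_zero (Finset.mem_univ i) hi
    rw [this] at hpos
    exact lt_irrefl 0 hpos
  -- the gradient
  set g : ℕ → Fin n → ℝ := fun k => H *ᵥ x k + b with hg
  set Q : ℕ → Polynomial ℝ := fun k =>
    ∏ i ∈ Finset.univ.filter (fun i : Fin n => (i : ℕ) < k),
      (1 - C (μ (σ i))⁻¹ * X) with hQ
  have key : ∀ k : ℕ, k ≤ n → g k = (aeval H (Q k)) *ᵥ g 0 := by
    intro k
    induction k with
    | zero =>
      intro _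
      have : Q 0 = 1 := by
        simp [hQ]
      rw [this]
      simp
    | succ k ih =>
      intro hk
      have hk' : k < n := hk
      set c := (μ (σ ⟨k, hk'⟩))⁻¹ with hc
      have hQs : Q (k + 1) = (1 - C c * X) * Q k := by
        have hset : Finset.univ.filter (fun i : Fin n => (i : ℕ) < k + 1)
            = insert (⟨k, hk'⟩ : Fin n)
              (Finset.univ.filter (fun i : Fin n => (i : ℕ) < k)) := by
          ext i
          simp [Fin.ext_iff]
          omega
        rw [hQ]
        simp only [hset]
        rw [Finset.prod_insert (by simp)]
      have hstep : g (k + 1) = (1 - c • H) *ᵥ g k := by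
        have hx := hiter ⟨k, hk'⟩
        simp only [hg]
        rw [show ((⟨k, hk'⟩ : Fin n) : ℕ) = k from rfl] at hx
        rw [hx]
        rw [Matrix.mulVec_sub, Matrix.mulVec_smul, Matrix.sub_mulVec,
          Matrix.one_mulVec, Matrix.smul_mulVec]
        abel
      have haev : aeval H (1 - C c * X) = 1 - c • H := by
        simp [Algebra.algebraMap_eq_smul_one, smul_mul_assoc]
      rw [hstep, ih (le_of_lt hk'), hQs, _root_.map_mul, haev, Matrix.mulVec_mulVec]
  -- the final gradient vanishes
  have hQn : Q n = ∏ i : Fin n, (1 - C (μ i)⁻¹ * X) := by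
    have hset : Finset.univ.filter (fun i : Fin n => (i : ℕ) < n) = Finset.univ := by
      ext i
      simp [i.isLt]
    rw [hQ]
    simp only [hset]
    exact Equiv.prod_comp σ (fun i => 1 - C (μ i)⁻¹ * X)
  have hfac : ∀ i : Fin n, (1 : Polynomial ℝ) - C (μ i)⁻¹ * X
      = C (-(μ i)⁻¹) * (X - C (μ i)) := by
    intro i
    rw [map_neg, neg_mul, mul_sub, ← C_mul, inv_mul_cancel₀ (hμ i), C_1]
    ring
  have hQzero : aeval H (Q n) = 0 := by
    rw [hQn, Finset.prod_congr rfl (fun i _ => hfac i), Finset.prod_mul_distrib,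
      ← hchar, _root_.map_mul, Matrix.aeval_self_charpoly, mul_zero]
  have hgn : H *ᵥ x n + b = 0 := by
    have := key n le_rfl
    rw [hQzero] at this
    simpa [hg] using this
  refine ⟨hgn, ?_⟩
  intro y hy
  set d := y - x n with hdd
  have hdne : d ≠ 0 := sub_ne_zero.mpr hy
  have hpos : 0 < d ⬝ᵥ (H *ᵥ d) := by
    simpa using hH.dotProduct_mulVec_pos hdne
  have hsym : Hᵀ = H := by
    have := hH.1
    simpa [Matrix.IsHermitian] using this
  have hcomm : x n ⬝ᵥ (H *ᵥ d) = d ⬝ᵥ (H *ᵥ x n) := by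
    rw [Matrix.dotProduct_mulVec, ← Matrix.mulVec_transpose, hsym,
      dotProduct_comm]
  have hzero : d ⬝ᵥ (H *ᵥ x n) + d ⬝ᵥ b = 0 := by
    have : d ⬝ᵥ (H *ᵥ x n + b) = 0 := by rw [hgn]; simp
    simpa [dotProduct_add] using this
  have hyd : y = x n + d := by simp [hdd]
  rw [hyd]
  simp only [Matrix.mulVec_add, dotProduct_add, add_dotProduct]
  have hbd : b ⬝ᵥ d = d ⬝ᵥ b := dotProduct_comm _ _
  nlinarith [hpos, hcomm, hzero, hbd]
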